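/- Fix an integer k ≥ 1. The polynomial sequence {W(n,k)(x)}_{n ≥ k} is a generalized Sturm sequence: each W(n,k)(x) is real-rooted and W(n,k)(x) ≼ W(n+1,k)(x) for all n ≥ k. Here W(n,k)(x) = Σ_{m=0}^{k} w(n,k,m)x^m with w(n,k,m) = (1/k)*C(n,k-1)*C(n-k-1,m-1)*C(k,m) for 0 < m ≤ k, k+m ≤ n, w(n,k,0)=1 if n=k, and 0 otherwise. -/

import Mathlib

open Polynomial

/-- A real polynomial is real-rooted if its number of real roots (with multiplicity)
equals its degree, i.e. all of its complex roots are real. -/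
def RealRooted (F : Polynomial ℝ) : Prop :=
  Multiset.card F.roots = F.natDegree

/-- `Interlaces G F` means `G ≼ F`: listing the zeros of the real-rooted polynomials
`F` and `G` in weakly decreasing order `α₁ ≥ α₂ ≥ ⋯` and `β₁ ≥ β₂ ≥ ⋯`, either
`deg F = deg G = n` and `βₙ ≤ αₙ ≤ βₙ₋₁ ≤ αₙ₋₁ ≤ ⋯ ≤ β₁ ≤ α₁`, or
`deg F = deg G + 1 = n` and `αₙ ≤ βₙ₋₁ ≤ αₙ₋₁ ≤ ⋯ ≤ β₁ ≤ α₁`; by convention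
constants interlace polynomials of degree at most one, and `0` interlaces and is
interlaced by every polynomial. (Below the sorted lists are ascending, so the
indices are reversed.) -/
noncomputable def Interlaces (G F : Polynomial ℝ) : Prop :=
  G = 0 ∨ F = 0 ∨ (F.natDegree ≤ 1 ∧ G.natDegree = 0) ∨
  (RealRooted F ∧ RealRooted G ∧
    (let a := F.roots.sort (· ≤ ·)
     let b := G.roots.sort (· ≤ ·)
     (F.natDegree = G.natDegree ∧ ∀ i < F.natDegree,
        b.getD i 0 ≤ a.getD i 0 ∧ (i + 1 < F.natDegree → a.getD i 0 ≤ b.getD (i + 1) 0)) ∨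
     (F.natDegree = G.natDegree + 1 ∧ ∀ i < G.natDegree,
        a.getD i 0 ≤ b.getD i 0 ∧ b.getD i 0 ≤ a.getD (i + 1) 0)))


noncomputable def w (n k m : ℤ) : ℚ :=
  if 0 < m ∧ m ≤ k ∧ k + m ≤ n then
    (1 / (k : ℚ)) * (n.toNat.choose (k - 1).toNat : ℚ) *
      ((n - k - 1).toNat.choose (m - 1).toNat : ℚ) * (k.toNat.choose m.toNat : ℚ)
  else if m = 0 ∧ n = k then 1 else 0

noncomputable def W (n k : ℤ) : Polynomial ℝ :=
  ∑ m ∈ Finset.range (k.toNat + 1), Polynomial.C ((w n k m : ℚ) : ℝ) * X ^ m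


namespace S15
open Finset Filter

/-- coefficient of the reduced polynomial u_a -/
def cf (K a j : ℕ) : ℕ := a.choose j * K.choose (j+1)

noncomputable def U (K a : ℕ) : Polynomial ℝ :=
  ∑ j ∈ range K, Polynomial.C ((cf K a j : ℝ)) * X ^ j

lemma coeff_U (K a N : ℕ) : (U K a).coeff N = if N < K then (cf K a N : ℝ) else 0 := by
  simp [U, Polynomial.finset_sum_coeff, Polynomial.coeff_C_mul, Polynomial.coeff_X_pow]

lemma cf_zero_of_lt (K a j : ℕ) (h : a < j) : cf K a j = 0 := by
  simp [cf, Nat.choose_eq_zero_of_lt h]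

lemma cf_zero_of_ge (K a j : ℕ) (h : K ≤ j) : cf K a j = 0 := by
  simp [cf, Nat.choose_eq_zero_of_lt (by omega : K < j + 1)]

lemma cf_top_pos (K a : ℕ) (hK : 1 ≤ K) : 0 < cf K a (min a (K-1)) := by
  have h1 : 0 < a.choose (min a (K-1)) := Nat.choose_pos (by omega)
  have h2 : 0 < K.choose (min a (K-1) + 1) := Nat.choose_pos (by omega)
  exact Nat.mul_pos h1 h2

lemma natDegree_U (K a : ℕ) (hK : 1 ≤ K) : (U K a).natDegree = min a (K-1) := by
  apply le_antisymm
  · rw [Polynomial.natDegree_le_iff_coeff_eq_zero]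
    intro m hm
    rw [coeff_U]
    split
    · rcases Nat.lt_or_ge a m with h | h
      · simp [cf_zero_of_lt K a m h]
      · next hmK => exact absurd (by omega : m ≤ min a (K-1)) (by omega)
    · rfl
  · apply Polynomial.le_natDegree_of_ne_zero
    rw [coeff_U, if_pos (by omega)]
    exact_mod_cast (cf_top_pos K a hK).ne'

lemma leadingCoeff_U (K a : ℕ) (hK : 1 ≤ K) :
    (U K a).leadingCoeff = (cf K a (min a (K-1)) : ℝ) := by
  rw [Polynomial.leadingCoeff, natDegree_U K a hK, coeff_U, if_pos (by omega)]

lemma U_ne_zero (K a : ℕ) (hK : 1 ≤ K) : U K a ≠ 0 := by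
  intro h
  have := leadingCoeff_U K a hK
  rw [h] at this
  simp at this
  exact_mod_cast (cf_top_pos K a hK).ne' (by exact_mod_cast this.symm)

/-- cast identity: n.choose (k+1) * (k+1) = n.choose k * (n - k) in ℝ -/
lemma choose_cast_id (n k : ℕ) :
    ((n.choose (k+1) : ℝ)) * (k+1) = (n.choose k : ℝ) * ((n : ℝ) - k) := by
  rcases le_or_gt k n with h | h
  · have := Nat.choose_succ_right_eq n k
    have h2 : ((n.choose (k+1) * (k+1) : ℕ) : ℝ) = ((n.choose k * (n - k) : ℕ) : ℝ) := by
      rw [this]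
    push_cast [Nat.cast_sub h] at h2
    push_cast
    linarith
  · simp [Nat.choose_eq_zero_of_lt h, Nat.choose_eq_zero_of_lt (by omega : n < k + 1)]

/-- the key binomial identity over ℝ -/
lemma cf_id (K a j : ℕ) (hj : 1 ≤ j) :
    ((a : ℝ) + 2) * (cf K (a+1) j : ℝ)
      = ((a : ℝ) + 2 + j) * (cf K a j : ℝ) + ((K : ℝ) - j) * (cf K a (j-1) : ℝ) := by
  obtain ⟨i, rfl⟩ : ∃ i, j = i + 1 := ⟨j - 1, by omega⟩
  simp only [cf, Nat.add_sub_cancel]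
  have hsplit : (a+1).choose (i+1) = a.choose i + a.choose (i+1) := Nat.choose_succ_succ a i
  have h1 : ((a.choose (i+1) : ℝ)) * (i+1) = (a.choose i : ℝ) * ((a : ℝ) - i) :=
    choose_cast_id a i
  have h2 : ((K.choose (i+1+1) : ℝ)) * (((i:ℝ)+1)+1) = (K.choose (i+1) : ℝ) * ((K : ℝ) - ((i:ℝ)+1)) := by
    have := choose_cast_id K (i+1)
    push_cast at this ⊢
    linarith
  rw [hsplit]
  push_cast
  nlinarith [h1, h2]

lemma coeff_X_mul' (p : ℝ[X]) (N : ℕ) :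
    (X * p).coeff N = if N = 0 then 0 else p.coeff (N-1) := by
  cases N with
  | zero => simp [Polynomial.coeff_X_mul]
  | succ n => simp [Polynomial.coeff_X_mul]

lemma U_rec (K a : ℕ) : ((a : ℝ) + 2) • U K (a+1)
    = (Polynomial.C ((a : ℝ) + 2) + Polynomial.C ((K : ℝ) - 1) * X) * U K a
      + X * (1 - X) * derivative (U K a) := by
  have hX : X * (1 - X) * derivative (U K a)
      = X * derivative (U K a) - X * (X * derivative (U K a)) := by ring
  rw [hX]
  ext N
  rw [Polynomial.coeff_smul, Polynomial.coeff_add, Polynomial.coeff_sub, add_mul,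
    Polynomial.coeff_add, Polynomial.coeff_C_mul, mul_assoc (Polynomial.C ((K:ℝ)-1)),
    Polynomial.coeff_C_mul, coeff_X_mul', coeff_X_mul', coeff_X_mul', coeff_X_mul']
  simp only [Polynomial.coeff_derivative, coeff_U, smul_eq_mul]
  match N with
  | 0 =>
    simp only [if_pos rfl]
    have : cf K (a+1) 0 = cf K a 0 := by simp [cf]
    split_ifs <;> simp [this]
  | 1 =>
    norm_num
    split_ifs with h1 h2 h2
    · have hid := cf_id K a 1 le_rfl
      simp only [Nat.sub_self] at hid
      push_cast at hid ⊢
      linarith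
    · omega
    · have hK1 : K = 1 := by omega
      subst hK1
      norm_num
    · norm_num
  | (m+2) =>
    simp only [show m+2-1 = m+1 from rfl, show m+1-1 = m from rfl]
    norm_num
    split_ifs with h1 h2 h2
    · have hid := cf_id K a (m+2) (by omega)
      simp only [show m+2-1 = m+1 from rfl] at hid
      push_cast at hid ⊢
      linarith
    · omega
    · have hK2 : K = m+2 := by omega
      subst hK2
      push_cast
      ring
    · ring

lemma mono_of_consec (D : ℕ) (f : ℕ → ℝ) (h : ∀ m, m + 1 < D → f m < f (m+1)) :
    ∀ i j, i < j → j < D → f i < f j := by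
  intro i j hij hjD
  induction j with
  | zero => omega
  | succ n ih =>
    rcases Nat.lt_or_ge i n with h2 | h2
    · exact lt_trans (ih h2 (by omega)) (h n (by omega))
    · have : i = n := by omega
      subst this; exact h i (by omega)

lemma factor_of_roots (v : Polynomial ℝ) (hv : v ≠ 0) (s : ℕ → ℝ)
    (hinj : ∀ i j, i < v.natDegree → j < v.natDegree → i ≠ j → s i ≠ s j)
    (hroot : ∀ i < v.natDegree, v.eval (s i) = 0) :
    v.roots = (Finset.range v.natDegree).val.map s ∧
    v = Polynomial.C v.leadingCoeff * ∏ i ∈ Finset.range v.natDegree, (X - Polynomial.C (s i)) := by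
  set D := v.natDegree with hD
  set m : Multiset ℝ := (Finset.range D).val.map s with hm
  have hnodup : m.Nodup := by
    refine Multiset.Nodup.map_on ?_ (Finset.range D).nodup
    intro i hi j hj hij
    by_contra hne
    exact hinj i j (by simpa using hi) (by simpa using hj) hne hij
  have hle : m ≤ v.roots := by
    rw [Multiset.le_iff_count]
    intro x
    rcases Nat.eq_zero_or_pos (m.count x) with h0 | h0
    · simp [h0]
    · have hx : x ∈ m := Multiset.count_pos.mp h0
      obtain ⟨i, hi, rfl⟩ := Multiset.mem_map.mp hx
      have h1 : m.count (s i) ≤ 1 := Multiset.nodup_iff_count_le_one.mp hnodup _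
      have h2 : 0 < v.roots.count (s i) := by
        rw [Multiset.count_pos]
        exact Polynomial.mem_roots'.mpr ⟨hv, hroot i (by simpa using hi)⟩
      omega
  have hcardm : Multiset.card m = D := by simp [hm]
  have heq : m = v.roots :=
    Multiset.eq_of_le_of_card_le hle (by rw [hcardm]; exact v.card_roots')
  refine ⟨heq.symm, ?_⟩
  have hroots_card : Multiset.card v.roots = D := by rw [← heq, hcardm]
  have hfac := Polynomial.C_leadingCoeff_mul_prod_multiset_X_sub_C hroots_card
  conv_lhs => rw [← hfac]
  rw [← heq, hm, Multiset.map_map, Finset.prod_eq_multiset_prod]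
  rfl

/-- products of linear factors: degree, roots, sorted roots -/
lemma prod_facts (E : ℝ) (hE : E ≠ 0) (D : ℕ) (t : ℕ → ℝ)
    (ht : ∀ i j, i < j → j < D → t i < t j) :
    (Polynomial.C E * ∏ i ∈ Finset.range D, (X - Polynomial.C (t i))).natDegree = D ∧
    (Polynomial.C E * ∏ i ∈ Finset.range D, (X - Polynomial.C (t i))).roots
      = (Finset.range D).val.map t ∧
    (Polynomial.C E * ∏ i ∈ Finset.range D, (X - Polynomial.C (t i))).roots.sort (· ≤ ·)
      = (List.range D).map t := by
  have h1 : (∏ i ∈ Finset.range D, (X - Polynomial.C (t i))).natDegree = D := by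
    rw [Polynomial.natDegree_prod _ _ (fun i _ => Polynomial.X_sub_C_ne_zero (t i))]
    simp [Polynomial.natDegree_X_sub_C]
  have hprodne : (∏ i ∈ Finset.range D, (X - Polynomial.C (t i))) ≠ 0 :=
    Finset.prod_ne_zero_iff.mpr (fun i _ => Polynomial.X_sub_C_ne_zero (t i))
  have hdeg : (Polynomial.C E * ∏ i ∈ Finset.range D, (X - Polynomial.C (t i))).natDegree = D := by
    rw [Polynomial.natDegree_C_mul hE, h1]
  have hroots : (Polynomial.C E * ∏ i ∈ Finset.range D, (X - Polynomial.C (t i))).roots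
      = (Finset.range D).val.map t := by
    rw [Polynomial.roots_C_mul _ hE, Finset.prod_eq_multiset_prod]
    have hmm : Multiset.map (fun i => X - Polynomial.C (t i)) (Finset.range D).val
        = Multiset.map (fun a => X - Polynomial.C a) ((Finset.range D).val.map t) := by
      rw [Multiset.map_map]; rfl
    rw [hmm]
    exact Polynomial.roots_multiset_prod_X_sub_C _
  refine ⟨hdeg, hroots, ?_⟩
  rw [hroots]
  have hcoe : (Finset.range D).val.map t = ((List.range D).map t : List ℝ) := by
    simp [Finset.range_val]
    rfl
  rw [hcoe]
  have hsorted : ((List.range D).map t).Pairwise (· ≤ ·) := by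
    rw [List.pairwise_iff_getElem]
    intro i j hi hj hij
    simp only [List.getElem_map, List.getElem_range]
    exact le_of_lt (ht i j hij (by simpa using hj))
  refine List.Perm.eq_of_pairwise' (Multiset.pairwise_sort _ _) hsorted ?_
  rw [← Multiset.coe_eq_coe, Multiset.sort_eq]

lemma getD_range_map (D : ℕ) (t : ℕ → ℝ) (i : ℕ) (hi : i < D) :
    ((List.range D).map t).getD i 0 = t i := by
  rw [List.getD_eq_getElem _ _ (by simpa using hi)]
  simp

/-- Intermediate value: opposite signs on endpoints give a root strictly inside. -/
lemma root_between (v : Polynomial ℝ) (x y : ℝ) (hxy : x < y) {m : ℕ}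
    (hx : 0 < (-1:ℝ)^(m+1) * v.eval x) (hy : 0 < (-1:ℝ)^m * v.eval y) :
    ∃ z, x < z ∧ z < y ∧ v.eval z = 0 := by
  have hcont : ContinuousOn (fun x => v.eval x) (Set.Icc x y) :=
    (Polynomial.continuous v).continuousOn
  rcases Nat.even_or_odd m with hm | hm
  · have h1 : v.eval x < 0 := by
      rw [hm.add_one.neg_one_pow (α := ℝ)] at hx; linarith
    have h2 : 0 < v.eval y := by
      rw [hm.neg_one_pow (α := ℝ)] at hy; linarith
    have := intermediate_value_Ioo (le_of_lt hxy) hcont (Set.mem_Ioo.mpr ⟨h1, h2⟩)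
    obtain ⟨z, hz, hze⟩ := this
    exact ⟨z, hz.1, hz.2, hze⟩
  · have h1 : 0 < v.eval x := by
      rw [(Odd.add_one hm).neg_one_pow (α := ℝ)] at hx; linarith
    have h2 : v.eval y < 0 := by
      rw [hm.neg_one_pow (α := ℝ)] at hy; linarith
    have := intermediate_value_Ioo' (le_of_lt hxy) hcont (Set.mem_Ioo.mpr ⟨h2, h1⟩)
    obtain ⟨z, hz, hze⟩ := this
    exact ⟨z, hz.1, hz.2, hze⟩

/-- a point far to the left where the polynomial has the sign of its degree parity -/
lemma far_left (v : Polynomial ℝ) (hlc : 0 < v.leadingCoeff) (hdeg : 0 < v.natDegree) (b : ℝ) :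
    ∃ y, y < b ∧ 0 < (-1:ℝ)^(v.natDegree) * v.eval y := by
  set D := v.natDegree with hD
  have hv : v ≠ 0 := fun h => by simp [h] at hlc
  set R : Polynomial ℝ := Polynomial.C ((-1:ℝ)^D) * (v.comp (-X)) with hR
  have hnegX : (-X : Polynomial ℝ).natDegree = 1 := by
    rw [Polynomial.natDegree_neg, Polynomial.natDegree_X]
  have hlcnegX : (-X : Polynomial ℝ).leadingCoeff = -1 := by
    rw [Polynomial.leadingCoeff_neg, Polynomial.leadingCoeff_X]
  have hcompdeg : (v.comp (-X)).natDegree = D := by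
    rw [Polynomial.natDegree_comp, hnegX, mul_one]
  have hlcR : R.leadingCoeff = v.leadingCoeff := by
    rw [hR, Polynomial.leadingCoeff_mul, Polynomial.leadingCoeff_C,
      Polynomial.leadingCoeff_comp (by rw [hnegX]; omega), hlcnegX, ← hD]
    rcases Nat.even_or_odd D with h | h
    · simp [h.neg_one_pow (α := ℝ)]
    · simp [h.neg_one_pow (α := ℝ)]
  have hRdeg : R.natDegree = D := by
    rw [hR, Polynomial.natDegree_C_mul (by positivity), hcompdeg]
  have hRdegpos : 0 < R.degree := by
    rw [← Polynomial.natDegree_pos_iff_degree_pos, hRdeg]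
    exact hdeg
  have htend : Tendsto (fun x => R.eval x) atTop atTop :=
    Polynomial.tendsto_atTop_of_leadingCoeff_nonneg R hRdegpos (by rw [hlcR]; exact hlc.le)
  have hev : ∀ᶠ x in atTop, 0 < R.eval x ∧ -b < x :=
    (htend.eventually_gt_atTop 0).and (eventually_gt_atTop (-b))
  obtain ⟨x, hx1, hx2⟩ := hev.exists
  refine ⟨-x, by linarith, ?_⟩
  have hevR : R.eval x = (-1:ℝ)^D * v.eval (-x) := by
    rw [hR]
    simp [Polynomial.eval_comp]
  rw [← hevR]
  exact hx1

/-- KEY: a polynomial alternating in sign on d+1 increasing points, with positive leading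
coefficient and degree d or d+1, factors with interlacing roots. -/
lemma key (v : Polynomial ℝ) (d : ℕ) (t : ℕ → ℝ)
    (hmono : ∀ i j, i < j → j ≤ d → t i < t j)
    (hsign : ∀ i, i ≤ d → 0 < (-1:ℝ)^(d-i) * v.eval (t i))
    (hlc : 0 < v.leadingCoeff)
    (hD : v.natDegree = d ∨ v.natDegree = d + 1) :
    ∃ s : ℕ → ℝ,
      v = Polynomial.C v.leadingCoeff * ∏ i ∈ Finset.range v.natDegree, (X - Polynomial.C (s i)) ∧
      v.roots = (Finset.range v.natDegree).val.map s ∧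
      (∀ i j, i < j → j < v.natDegree → s i < s j) ∧
      (∀ i, i < d → t i < s (i + (v.natDegree - d)) ∧ s (i + (v.natDegree - d)) < t (i+1)) ∧
      (v.natDegree = d + 1 → s 0 < t 0) := by
  have hv : v ≠ 0 := fun h => by simp [h] at hlc
  have hgap : ∀ i, ∃ x, i < d → (t i < x ∧ x < t (i+1) ∧ v.eval x = 0) := by
    intro i
    rcases Nat.lt_or_ge i d with hi | hi
    · have h1 := hsign i hi.le
      have h2 := hsign (i+1) hi
      rw [show d - i = (d - (i+1)) + 1 by omega] at h1
      obtain ⟨z, hz1, hz2, hz3⟩ := root_between v (t i) (t (i+1)) (hmono i (i+1) (by omega) hi) h1 h2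
      exact ⟨z, fun _ => ⟨hz1, hz2, hz3⟩⟩
    · exact ⟨0, fun h => absurd h (by omega)⟩
  choose g hg using hgap
  rcases hD with hDeq | hDeq
  · -- equal degrees : D = d
    refine ⟨g, ?_⟩
    have hroot : ∀ i < v.natDegree, v.eval (g i) = 0 := fun i hi => (hg i (by omega)).2.2
    have hmonog : ∀ i j, i < j → j < v.natDegree → g i < g j := by
      rw [hDeq]
      refine mono_of_consec d g (fun m hm => ?_)
      have h1 := (hg m (by omega)).2.1
      have h2 := (hg (m+1) (by omega)).1
      linarith
    obtain ⟨hr, hf⟩ := factor_of_roots v hv g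
      (fun i j hi hj hij => by
        rcases Nat.lt_or_ge i j with h | h
        · exact (hmonog i j h hj).ne
        · exact (hmonog j i (by omega) hi).ne')
      hroot
    refine ⟨hf, hr, hmonog, ?_, ?_⟩
    · intro i hi
      rw [hDeq, Nat.sub_self, Nat.add_zero]
      exact ⟨(hg i hi).1, (hg i hi).2.1⟩
    · intro h; omega
  · -- degree jump : D = d + 1
    have hdpos : 0 < v.natDegree := by omega
    obtain ⟨y, hy1, hy2⟩ := far_left v hlc hdpos (t 0)
    rw [hDeq] at hy2
    have h0 := hsign 0 (by omega)
    rw [Nat.sub_zero] at h0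
    obtain ⟨z0, hz01, hz02, hz03⟩ := root_between v y (t 0) hy1 hy2 h0
    set s : ℕ → ℝ := fun i => if i = 0 then z0 else g (i - 1) with hs
    have hroot : ∀ i < v.natDegree, v.eval (s i) = 0 := by
      intro i hi
      rcases Nat.eq_zero_or_pos i with rfl | hipos
      · simpa [hs] using hz03
      · have : s i = g (i-1) := by simp [hs, hipos.ne']
        rw [this]
        exact (hg (i-1) (by omega)).2.2
    have hmonos : ∀ i j, i < j → j < v.natDegree → s i < s j := by
      rw [hDeq]
      refine mono_of_consec (d+1) s (fun m hm => ?_)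
      rcases Nat.eq_zero_or_pos m with rfl | hmpos
      · have h2 := (hg 0 (by omega)).1
        simp only [hs, if_pos rfl, if_neg (by omega : ¬ (0+1 = 0))]
        simp only [Nat.add_sub_cancel]
        linarith
      · have h1 := (hg (m-1) (by omega)).2.1
        have h2 := (hg m (by omega)).1
        simp only [hs, if_neg hmpos.ne', if_neg (by omega : ¬ (m+1 = 0)), Nat.add_sub_cancel]
        have : m - 1 + 1 = m := by omega
        rw [this] at h1
        linarith
    obtain ⟨hr, hf⟩ := factor_of_roots v hv s
      (fun i j hi hj hij => by
        rcases Nat.lt_or_ge i j with h | h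
        · exact (hmonos i j h hj).ne
        · exact (hmonos j i (by omega) hi).ne')
      hroot
    refine ⟨s, hf, hr, hmonos, ?_, ?_⟩
    · intro i hi
      rw [hDeq, Nat.add_sub_cancel_left]
      have : s (i + 1) = g i := by simp [hs]
      rw [this]
      exact ⟨(hg i hi).1, (hg i hi).2.1⟩
    · intro _
      simpa [hs] using hz02

/-- the inductive invariant -/
def Inv (K a : ℕ) (s : ℕ → ℝ) : Prop :=
  (∀ i j, i < j → j < min a (K-1) → s i < s j) ∧ (∀ i, i < min a (K-1) → s i < 0) ∧
  U K a = Polynomial.C ((cf K a (min a (K-1)) : ℝ))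
      * ∏ i ∈ Finset.range (min a (K-1)), (X - Polynomial.C (s i))

lemma sign_prod_neg (F : Finset ℕ) (f : ℕ → ℝ) (hf : ∀ j ∈ F, f j < 0) :
    0 < (-1:ℝ)^F.card * ∏ j ∈ F, f j := by
  induction F using Finset.induction_on with
  | empty => simp
  | @insert a F ha ih =>
    rw [Finset.card_insert_of_notMem ha, Finset.prod_insert ha, pow_succ]
    have h1 := ih (fun j hj => hf j (Finset.mem_insert_of_mem hj))
    have h2 := hf a (Finset.mem_insert_self a F)
    nlinarith

lemma inv_zero (K : ℕ) : Inv K 0 (fun _ => 0) := by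
  refine ⟨by omega, by omega, ?_⟩
  simp only [Nat.zero_min, Finset.range_zero, Finset.prod_empty, mul_one]
  rw [U]
  rcases Nat.eq_zero_or_pos K with rfl | hK
  · simp [cf]
  · rw [Finset.sum_eq_single 0]
    · simp
    · intro j _ hj
      have : cf K 0 j = 0 := by
        simp [cf, Nat.choose_eq_zero_of_lt (by omega : 0 < j)]
      simp [this]
    · intro h; exact absurd (Finset.mem_range.mpr hK) h

theorem step (K : ℕ) (hK : 1 ≤ K) (a : ℕ) (s : ℕ → ℝ) (h : Inv K a s) :
    ∃ s', Inv K (a+1) s' ∧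
      (∀ i, i < min a (K-1) →
        (if i < min a (K-1) then s i else 0) < s' (i + (min (a+1) (K-1) - min a (K-1))) ∧
        s' (i + (min (a+1) (K-1) - min a (K-1))) < (if i+1 < min a (K-1) then s (i+1) else 0)) ∧
      (min (a+1) (K-1) = min a (K-1) + 1 → s' 0 < (if 0 < min a (K-1) then s 0 else 0)) := by
  obtain ⟨hmono, hneg, hfac⟩ := h
  set d := min a (K-1) with hd
  set D := min (a+1) (K-1) with hD
  set t : ℕ → ℝ := fun i => if i < d then s i else 0 with ht
  set c : ℝ := ((cf K a d : ℕ) : ℝ) with hc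
  have hcpos : 0 < c := by rw [hc]; exact_mod_cast cf_top_pos K a hK
  -- t is strictly monotone up to d
  have htmono : ∀ i j, i < j → j ≤ d → t i < t j := by
    intro i j hij hjd
    rcases Nat.lt_or_ge j d with hj | hj
    · simp only [ht, if_pos (by omega : i < d), if_pos hj]
      exact hmono i j hij hj
    · have hjd : j = d := by omega
      simp only [ht, if_pos (by omega : i < d), if_neg (by omega : ¬ j < d)]
      exact hneg i (by omega)
  -- evaluation of u at its roots and at 0
  have hQ : ∀ i, i < d → (U K a).eval (s i) = 0 := by
    intro i hi
    rw [hfac]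
    simp only [Polynomial.eval_mul, Polynomial.eval_C, Polynomial.eval_prod,
      Polynomial.eval_sub, Polynomial.eval_X]
    rw [Finset.prod_eq_zero (Finset.mem_range.mpr hi) (by ring : s i - s i = 0)]
    ring
  have hU0 : 0 < (U K a).eval 0 := by
    rw [hfac]
    simp only [Polynomial.eval_mul, Polynomial.eval_C, Polynomial.eval_prod,
      Polynomial.eval_sub, Polynomial.eval_X]
    apply mul_pos hcpos
    apply Finset.prod_pos
    intro i hi
    have := hneg i (Finset.mem_range.mp hi)
    linarith
  -- derivative of u evaluated at a root
  have hderiv : ∀ i, i < d → (derivative (U K a)).eval (s i)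
      = c * ∏ j ∈ (Finset.range d).erase i, (s i - s j) := by
    intro i hi
    rw [hfac, Polynomial.derivative_C_mul]
    rw [← Finset.mul_prod_erase (Finset.range d) _ (Finset.mem_range.mpr hi)]
    rw [derivative_mul]
    simp only [Polynomial.derivative_X_sub_C, one_mul]
    simp only [Polynomial.eval_mul, Polynomial.eval_add, Polynomial.eval_C,
      Polynomial.eval_mul, Polynomial.eval_sub, Polynomial.eval_X, sub_self, zero_mul,
      add_zero, Polynomial.eval_prod]
  -- the sign of the derivative at the i-th root
  have hderivsign : ∀ i, i < d → 0 < (-1:ℝ)^(d-1-i) * (derivative (U K a)).eval (s i) := by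
    intro i hi
    rw [hderiv i hi]
    have hsplit : (Finset.range d).erase i = Finset.range i ∪ Finset.Ico (i+1) d := by
      ext x
      simp only [Finset.mem_erase, Finset.mem_range, Finset.mem_union, Finset.mem_Ico]
      omega
    have hdisj : Disjoint (Finset.range i) (Finset.Ico (i+1) d) := by
      rw [Finset.disjoint_left]
      intro x hx hx2
      simp only [Finset.mem_range] at hx
      simp only [Finset.mem_Ico] at hx2
      omega
    rw [hsplit, Finset.prod_union hdisj]
    have hp1 : 0 < ∏ j ∈ Finset.range i, (s i - s j) := by
      apply Finset.prod_pos
      intro j hj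
      have := hmono j i (Finset.mem_range.mp hj) hi
      linarith
    have hp2 : 0 < (-1:ℝ)^(d-1-i) * ∏ j ∈ Finset.Ico (i+1) d, (s i - s j) := by
      have hcard : (Finset.Ico (i+1) d).card = d - 1 - i := by
        rw [Nat.card_Ico]; omega
      rw [← hcard]
      apply sign_prod_neg
      intro j hj
      simp only [Finset.mem_Ico] at hj
      have := hmono i j (by omega) hj.2
      linarith
    have h3 : 0 < c * ((∏ j ∈ Finset.range i, (s i - s j)) *
        ((-1:ℝ)^(d-1-i) * ∏ j ∈ Finset.Ico (i+1) d, (s i - s j))) :=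
      mul_pos hcpos (mul_pos hp1 hp2)
    nlinarith [h3]
  -- signs of U K (a+1) at the points t i
  have hsign : ∀ i, i ≤ d → 0 < (-1:ℝ)^(d-i) * (U K (a+1)).eval (t i) := by
    intro i hi
    have hrec := congrArg (Polynomial.eval (t i)) (U_rec K a)
    simp only [Polynomial.eval_smul, Polynomial.eval_mul, Polynomial.eval_add,
      Polynomial.eval_C, Polynomial.eval_X, Polynomial.eval_sub, Polynomial.eval_one,
      smul_eq_mul] at hrec
    rcases Nat.lt_or_ge i d with hid | hid
    · -- t i = s i, a root of u
      have hti : t i = s i := by simp [ht, hid]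
      rw [hti] at hrec ⊢
      rw [hQ i hid] at hrec
      have hds := hderivsign i hid
      have hsneg := hneg i hid
      have hpow : (-1:ℝ)^(d-i) = -(-1:ℝ)^(d-1-i) := by
        rw [show d - i = (d-1-i) + 1 by omega, pow_succ]
        ring
      rw [hpow]
      have hA : (0:ℝ) < (a:ℝ) + 2 := by positivity
      have hq : s i * (1 - s i) < 0 := by nlinarith [hsneg]
      have h5 : 0 < (-(s i * (1 - s i))) *
          ((-1:ℝ)^(d-1-i) * (derivative (U K a)).eval (s i)) :=
        mul_pos (by linarith) hds
      have h6 : ((a:ℝ)+2) * (-(-1:ℝ)^(d-1-i) * (U K (a+1)).eval (s i))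
          = (-(s i * (1 - s i))) * ((-1:ℝ)^(d-1-i) * (derivative (U K a)).eval (s i)) := by
        linear_combination (-(-1:ℝ)^(d-1-i)) * hrec
      nlinarith [h5, h6, hA]
    · have hti : t i = 0 := by simp [ht, show ¬ i < d by omega]
      have hieq : i = d := by omega
      rw [hti] at hrec ⊢
      rw [hieq, Nat.sub_self, pow_zero, one_mul]
      have hA : (0:ℝ) < (a:ℝ) + 2 := by positivity
      nlinarith [hU0, hrec, hA]
  -- apply the key lemma to U K (a+1)
  have hlc : 0 < (U K (a+1)).leadingCoeff := by
    rw [leadingCoeff_U K (a+1) hK]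
    exact_mod_cast cf_top_pos K (a+1) hK
  have hDdeg : (U K (a+1)).natDegree = D := by rw [natDegree_U K (a+1) hK]
  have hDcases : (U K (a+1)).natDegree = d ∨ (U K (a+1)).natDegree = d + 1 := by
    rw [hDdeg]; omega
  obtain ⟨s', hfac', hroots', hmono', hgap', hlow'⟩ := key (U K (a+1)) d t htmono hsign hlc hDcases
  refine ⟨s', ⟨?_, ?_, ?_⟩, ?_, ?_⟩
  · intro i j hij hj
    exact hmono' i j hij (by rwa [hDdeg])
  · -- all new roots are negative
    intro i hiD
    rcases hDcases with hcase | hcase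
    · have hdD : D = d := by rw [← hDdeg, hcase]
      have hgap := hgap' i (by omega)
      rw [hcase, Nat.sub_self, Nat.add_zero] at hgap
      have h2 : t (i+1) ≤ 0 := by
        simp only [ht]
        split
        · exact le_of_lt (hneg _ (by omega))
        · exact le_refl 0
      linarith [hgap.2]
    · have hdD : D = d + 1 := by rw [← hDdeg, hcase]
      have ht0 : ∀ j, j ≤ d → t j ≤ 0 := by
        intro j hj
        simp only [ht]
        split
        · exact le_of_lt (hneg _ (by omega))
        · exact le_refl 0
      rcases Nat.eq_zero_or_pos i with rfl | hipos
      · have := hlow' hcase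
        linarith [ht0 0 (by omega)]
      · have hgap := hgap' (i-1) (by omega)
        rw [hcase, Nat.add_sub_cancel_left] at hgap
        have : i - 1 + 1 = i := by omega
        rw [this] at hgap
        linarith [hgap.2, ht0 i (by omega)]
  · rw [hDdeg, leadingCoeff_U K (a+1) hK] at hfac'
    exact hfac'
  · intro i hi
    have hgap := hgap' i hi
    rw [hDdeg] at hgap
    constructor
    · have := hgap.1
      simpa [ht, hi] using this
    · have := hgap.2
      simp only [ht] at this ⊢
      exact this
  · intro hDd
    have := hlow' (by rw [hDdeg]; exact hDd)
    simp only [ht] at this ⊢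
    exact this

lemma W_eq (k : ℤ) (hk : 1 ≤ k) (n : ℤ) (hn : k + 1 ≤ n) :
    W n k = Polynomial.C ((((1 / (k : ℚ)) * (n.toNat.choose (k - 1).toNat : ℚ) : ℚ)) : ℝ)
      * (X * U k.toNat (n - k - 1).toNat) := by
  set K := k.toNat with hK
  set A := (n - k - 1).toNat with hA
  set γ : ℚ := (1 / (k : ℚ)) * (n.toNat.choose (k - 1).toNat : ℚ) with hγ
  have hw0 : w n k 0 = 0 := by
    rw [w, if_neg (by omega : ¬ ((0:ℤ) < 0 ∧ (0:ℤ) ≤ k ∧ k + 0 ≤ n)),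
      if_neg (by omega : ¬ ((0:ℤ) = 0 ∧ n = k))]
  have hwm : ∀ m : ℕ, 1 ≤ m → m ≤ K → w n k (m : ℤ) = γ * (cf K A (m - 1) : ℚ) := by
    intro m h1 h2
    have hmk : (m : ℤ) ≤ k := by omega
    have hmt : ((m : ℤ)).toNat = m := by omega
    have hm1t : ((m : ℤ) - 1).toNat = m - 1 := by omega
    rw [w, cf]
    by_cases h3 : k + (m : ℤ) ≤ n
    · rw [if_pos ⟨by omega, hmk, h3⟩, hm1t, hmt, ← hA, ← hγ]
      rw [show m - 1 + 1 = m by omega]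
      push_cast
      ring
    · rw [if_neg (by tauto), if_neg (by omega)]
      have hlt : A < m - 1 := by omega
      rw [Nat.choose_eq_zero_of_lt hlt]
      push_cast
      ring
  rw [W]
  rw [Finset.sum_range_succ']
  simp only [Nat.cast_zero, hw0, Rat.cast_zero, Polynomial.C_0, zero_mul, pow_zero,
    mul_one, add_zero]
  rw [U, Finset.mul_sum, Finset.mul_sum]
  refine Finset.sum_congr rfl (fun j hj => ?_)
  rw [hwm (j+1) (by omega) (by simpa using Finset.mem_range.mp hj)]
  simp only [Nat.add_sub_cancel]
  push_cast
  rw [Polynomial.C_mul]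
  ring



lemma xprod (d : ℕ) (s : ℕ → ℝ) :
    X * ∏ i ∈ Finset.range d, (X - Polynomial.C (s i))
      = ∏ i ∈ Finset.range (d+1), (X - Polynomial.C (if i < d then s i else 0)) := by
  rw [Finset.prod_range_succ, if_neg (lt_irrefl d)]
  have hcong : ∏ i ∈ Finset.range d, (X - Polynomial.C (if i < d then s i else 0))
      = ∏ i ∈ Finset.range d, (X - Polynomial.C (s i)) :=
    Finset.prod_congr rfl (fun i hi => by rw [if_pos (Finset.mem_range.mp hi)])
  rw [hcong, Polynomial.C_0, sub_zero, mul_comm]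

lemma invAll (K : ℕ) (hK : 1 ≤ K) : ∀ a, ∃ s, Inv K a s := by
  intro a
  induction a with
  | zero => exact ⟨fun _ => 0, inv_zero K⟩
  | succ b ih =>
    obtain ⟨s, hs⟩ := ih
    obtain ⟨s', hs', -, -⟩ := step K hK b s hs
    exact ⟨s', hs'⟩

lemma W_pack (k : ℤ) (hk : 1 ≤ k) (n : ℤ) (hn : k + 1 ≤ n) (s : ℕ → ℝ)
    (h : Inv k.toNat (n - k - 1).toNat s) :
    (W n k).natDegree = min (n-k-1).toNat (k.toNat - 1) + 1 ∧
    RealRooted (W n k) ∧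
    (W n k).roots.sort (· ≤ ·)
      = (List.range (min (n-k-1).toNat (k.toNat-1) + 1)).map
        (fun i => if i < min (n-k-1).toNat (k.toNat-1) then s i else 0) := by
  set K := k.toNat with hKdef
  set A := (n - k - 1).toNat with hAdef
  set d := min A (K - 1) with hddef
  obtain ⟨hmono, hneg, hfac⟩ := h
  set T : ℕ → ℝ := fun i => if i < d then s i else 0 with hT
  set γ : ℝ := (((1 / (k : ℚ)) * (n.toNat.choose (k - 1).toNat : ℚ) : ℚ) : ℝ) with hγ
  have hγpos : 0 < γ := by
    rw [hγ]
    have h1 : (0:ℚ) < 1 / (k:ℚ) := by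
      have : (0:ℚ) < (k:ℚ) := by exact_mod_cast hk
      positivity
    have h2 : 0 < n.toNat.choose (k-1).toNat := Nat.choose_pos (by omega)
    have h2' : (0:ℚ) < (n.toNat.choose (k-1).toNat : ℚ) := by exact_mod_cast h2
    have := mul_pos h1 h2'
    exact_mod_cast this
  set E : ℝ := γ * ((cf K A d : ℕ) : ℝ) with hE
  have hEpos : 0 < E := by
    rw [hE]
    apply mul_pos hγpos
    exact_mod_cast cf_top_pos K A (by omega)
  have hWfac : W n k = Polynomial.C E * ∏ i ∈ Finset.range (d+1), (X - Polynomial.C (T i)) := by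
    rw [W_eq k hk n hn, hfac]
    rw [show X * (Polynomial.C ((cf K A d : ℕ) : ℝ) * ∏ i ∈ Finset.range d, (X - Polynomial.C (s i)))
        = Polynomial.C ((cf K A d : ℕ) : ℝ) * (X * ∏ i ∈ Finset.range d, (X - Polynomial.C (s i)))
      from by ring]
    rw [xprod d s, ← mul_assoc, ← Polynomial.C_mul]
  have hTmono : ∀ i j, i < j → j < d + 1 → T i < T j := by
    intro i j hij hj
    rcases Nat.lt_or_ge j d with h2 | h2
    · simp only [hT, if_pos (by omega : i < d), if_pos h2]
      exact hmono i j hij h2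
    · simp only [hT, if_pos (by omega : i < d), if_neg (by omega : ¬ j < d)]
      exact hneg i (by omega)
  obtain ⟨hdeg, hroots, hsort⟩ := prod_facts E hEpos.ne' (d+1) T hTmono
  rw [← hWfac] at hdeg hroots hsort
  refine ⟨hdeg, ?_, hsort⟩
  rw [RealRooted, hdeg, hroots]
  simp

end S15

/-- For fixed k ≥ 1, the sequence {W(n,k)(x)}_{n ≥ k} is a generalized Sturm sequence. -/
theorem stmt15 (k : ℤ) (hk : 1 ≤ k) :
    ∀ n : ℤ, k ≤ n → RealRooted (W n k) ∧ Interlaces (W n k) (W (n + 1) k) := by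
  have hK : 1 ≤ k.toNat := by omega
  intro n hn
  rcases eq_or_lt_of_le hn with heq | hlt
  · -- base case n = k : W k k = 1
    subst heq
    have hWk : W k k = 1 := by
      rw [W, Finset.sum_eq_single 0]
      · have hw0 : w k k 0 = 1 := by
          rw [w, if_neg (by omega : ¬((0:ℤ) < 0 ∧ (0:ℤ) ≤ k ∧ k + 0 ≤ k)), if_pos ⟨rfl, rfl⟩]
        simp [hw0]
      · intro m hm hm0
        have h1 : 1 ≤ m := Nat.pos_of_ne_zero hm0
        have hwm : w k k (m : ℤ) = 0 := by
          rw [w, if_neg (by omega), if_neg (by omega)]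
        simp [hwm]
      · intro h
        exact absurd (Finset.mem_range.mpr (by omega)) h
    constructor
    · rw [hWk, RealRooted]
      simp
    · right; right; left
      constructor
      · obtain ⟨s0, h0⟩ := S15.invAll k.toNat hK ((k + 1 - k - 1).toNat)
        have hd := (S15.W_pack k hk (k+1) (by omega) s0 h0).1
        have hz : (k + 1 - k - 1).toNat = 0 := by omega
        rw [hz] at hd
        simp only [Nat.zero_min] at hd
        omega
      · rw [hWk]
        simp
  · -- main case k + 1 ≤ n
    have hn1 : k + 1 ≤ n := hlt
    obtain ⟨s, hInv⟩ := S15.invAll k.toNat hK ((n - k - 1).toNat)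
    obtain ⟨s', hInv', hrel, hlow⟩ := S15.step k.toNat hK ((n - k - 1).toNat) s hInv
    have hA1 : (n + 1 - k - 1).toNat = (n - k - 1).toNat + 1 := by omega
    have hInvF : S15.Inv k.toNat ((n + 1 - k - 1).toNat) s' := by rw [hA1]; exact hInv'
    obtain ⟨hdegG, hrrG, hsortG⟩ := S15.W_pack k hk n hn1 s hInv
    obtain ⟨hdegF, hrrF, hsortF⟩ := S15.W_pack k hk (n+1) (by omega) s' hInvF
    rw [hA1] at hdegF hsortF
    set K := k.toNat with hKdef
    set A := (n - k - 1).toNat with hAdef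
    set d := min A (K-1) with hd
    set d' := min (A+1) (K-1) with hd'
    refine ⟨hrrG, ?_⟩
    right; right; right
    refine ⟨hrrF, hrrG, ?_⟩
    simp only [hsortF, hsortG, hdegF, hdegG]
    have hcases : d' = d ∨ d' = d + 1 := by omega
    rcases hcases with hdd | hdd
    · -- equal degrees
      left
      rw [hdd] at hrel ⊢
      simp only [Nat.sub_self, Nat.add_zero] at hrel
      refine ⟨rfl, ?_⟩
      intro i hi
      rw [S15.getD_range_map (d+1) _ i (by omega), S15.getD_range_map (d+1) _ i (by omega)]
      constructor
      · rcases Nat.lt_or_ge i d with h2 | h2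
        · have hr := (hrel i h2).1
          rw [if_pos h2] at hr
          simp only [if_pos h2]
          exact le_of_lt hr
        · simp only [if_neg (by omega : ¬ i < d)]
          exact le_rfl
      · intro hi1
        rw [S15.getD_range_map (d+1) _ (i+1) (by omega)]
        have h2 : i < d := by omega
        have hr := (hrel i h2).2
        simp only [if_pos h2]
        exact le_of_lt hr
    · -- degree jump
      right
      rw [hdd] at hrel hlow ⊢
      simp only [Nat.add_sub_cancel_left] at hrel
      refine ⟨rfl, ?_⟩
      intro i hi
      rw [S15.getD_range_map (d+1+1) _ i (by omega),
        S15.getD_range_map (d+1) _ i (by omega),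
        S15.getD_range_map (d+1+1) _ (i+1) (by omega)]
      constructor
      · -- a i ≤ b i
        rcases Nat.eq_zero_or_pos i with rfl | hipos
        · have h0 := hlow rfl
          simp only [if_pos (by omega : 0 < d + 1)]
          rcases Nat.eq_zero_or_pos d with hzz | hdpos
          · simp only [if_neg (by omega : ¬ (0:ℕ) < d)]
            simp only [if_neg (by omega : ¬ (0:ℕ) < d)] at h0
            linarith
          · simp only [if_pos hdpos]
            simp only [if_pos hdpos] at h0
            linarith
        · rcases Nat.lt_or_ge i d with h2 | h2
          · obtain ⟨m, rfl⟩ : ∃ m, i = m + 1 := ⟨i - 1, by omega⟩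
            have hr := (hrel m (by omega)).2
            simp only [if_pos (by omega : m + 1 < d + 1), if_pos h2]
            simp only [if_pos h2] at hr
            linarith
          · -- i = d
            have hieq : i = d := by omega
            subst hieq
            simp only [if_pos (by omega : d < d + 1), if_neg (by omega : ¬ d < d)]
            obtain ⟨hmF, hnegF, -⟩ := hInv'
            have := hnegF d (by omega)
            linarith
      · -- b i ≤ a (i+1)
        rcases Nat.lt_or_ge i d with h2 | h2
        · have hr := (hrel i h2).1
          rw [if_pos h2] at hr
          simp only [if_pos h2, if_pos (by omega : i + 1 < d + 1)]
          linarith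
        · have hieq : i = d := by omega
          subst hieq
          simp only [if_neg (by omega : ¬ d < d), if_neg (by omega : ¬ d + 1 < d + 1)]
          exact le_rfl
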